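/- arXiv:0902.4352 — 3 statements merged into one kernel-verified Lean document; each statement's English description precedes it below -/
import Mathlib

section
/- For real constants $a, b, c$, the function $\phi(y,v) = (|y|+1)^{-a}(|v|+1)^{-b}(|y+v|+1)^{-c}$ is integrable over $\mathbb{R}^2$ if and only if $a+b>1$, $a+c>1$, $b+c>1$ and $a+b+c>2$. -/
open MeasureTheory Real Set Filter

-- two-sided comparability bound
lemma myTwoComp {A B e : ℝ} (hA : 0 < A) (hB : 0 < B) (h1 : A ≤ 2*B) (h2 : B ≤ 2*A) :
    A ^ (-e) ≤ 2 ^ |e| * B ^ (-e) := by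
  rcases le_or_gt 0 e with he | he
  · rw [abs_of_nonneg he]
    have h3 : B/2 ≤ A := by linarith
    have h4 : (0:ℝ) < B/2 := by linarith
    calc A ^ (-e) ≤ (B/2) ^ (-e) := Real.rpow_le_rpow_of_nonpos h4 h3 (by linarith)
      _ = 2 ^ e * B ^ (-e) := by
          rw [div_rpow hB.le (by norm_num), Real.rpow_neg hB.le, Real.rpow_neg (by norm_num : (0:ℝ) < 2).le]
          field_simp
  · rw [abs_of_neg he]
    calc A ^ (-e) ≤ (2*B) ^ (-e) := Real.rpow_le_rpow hA.le h1 (by linarith)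
      _ = 2 ^ (-e) * B ^ (-e) := Real.mul_rpow (by norm_num) hB.le

lemma myShift {A B t : ℝ} (hB : 0 < B) (hBA : B ≤ A) (ht : 0 ≤ t) :
    A ^ (-t) ≤ B ^ (-t) := Real.rpow_le_rpow_of_nonpos hB hBA (by linarith)

lemma myInt1d {r : ℝ} (hr : 1 < r) : Integrable (fun x : ℝ => (|x| + 1) ^ (-r)) := by
  have h : ((Module.finrank ℝ ℝ : ℝ)) < r := by rw [Module.finrank_self]; exact_mod_cast hr
  simpa [Real.norm_eq_abs, add_comm] using integrable_one_add_norm (E := ℝ) (μ := volume) h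

lemma myInt2d {p q : ℝ} (hp : 1 < p) (hq : 1 < q) :
    Integrable (fun z : ℝ × ℝ => (|z.1| + 1) ^ (-p) * (|z.2| + 1) ^ (-q)) := by
  rw [MeasureTheory.Measure.volume_eq_prod]
  exact (myInt1d hp).mul_prod (myInt1d hq)

lemma myInt2d' {p q : ℝ} (hp : 1 < p) (hq : 1 < q) :
    Integrable (fun z : ℝ × ℝ => (|z.2| + 1) ^ (-p) * (|z.1 + z.2| + 1) ^ (-q)) := by
  have h2 := myInt2d hp hq
  rw [MeasureTheory.Measure.volume_eq_prod] at h2 ⊢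
  have mp := measurePreserving_prod_add_swap_right (volume : Measure ℝ) volume
  exact (mp.integrable_comp h2.aestronglyMeasurable).2 h2

noncomputable def myPhi (a b c : ℝ) : ℝ × ℝ → ℝ :=
  fun p => (|p.1| + 1) ^ (-a) * (|p.2| + 1) ^ (-b) * (|p.1 + p.2| + 1) ^ (-c)

lemma myPhi_cont (a b c : ℝ) : Continuous (myPhi a b c) := by
  unfold myPhi
  have h1 : Continuous fun p : ℝ × ℝ => |p.1| + 1 := by fun_prop
  have h2 : Continuous fun p : ℝ × ℝ => |p.2| + 1 := by fun_prop
  have h3 : Continuous fun p : ℝ × ℝ => |p.1 + p.2| + 1 := by fun_prop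
  exact ((h1.rpow_const (fun x => Or.inl (by positivity))).mul
    (h2.rpow_const (fun x => Or.inl (by positivity)))).mul
    (h3.rpow_const (fun x => Or.inl (by positivity)))

lemma myPhi_nonneg (a b c : ℝ) (p : ℝ × ℝ) : 0 ≤ myPhi a b c p := by
  unfold myPhi; positivity

lemma mySymSwap {a b c : ℝ} (h : Integrable (myPhi a b c)) : Integrable (myPhi b a c) := by
  rw [MeasureTheory.Measure.volume_eq_prod] at h ⊢
  have mp := MeasureTheory.Measure.measurePreserving_swap (μ := (volume : Measure ℝ)) (ν := (volume : Measure ℝ))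
  have := (mp.integrable_comp (myPhi_cont a b c).aestronglyMeasurable).2 h
  have heq : myPhi a b c ∘ Prod.swap = myPhi b a c := by
    funext p
    simp only [Function.comp_apply, Prod.swap, myPhi]
    rw [add_comm p.2 p.1]; ring
  rwa [heq] at this

lemma mySymShear {a b c : ℝ} (h : Integrable (myPhi a b c)) : Integrable (myPhi c b a) := by
  rw [MeasureTheory.Measure.volume_eq_prod] at h ⊢
  have mp1 := measurePreserving_sub_prod (volume : Measure ℝ) volume
  have h1 := (mp1.integrable_comp (myPhi_cont a b c).aestronglyMeasurable).2 h
  -- h1 : Integrable (myPhi a b c ∘ fun z => (z.1 - z.2, z.2))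
  have mp2 : MeasurePreserving (fun z : ℝ × ℝ => (-z.1, z.2))
      ((volume : Measure ℝ).prod volume) ((volume : Measure ℝ).prod volume) :=
    (Measure.measurePreserving_neg (volume : Measure ℝ)).prod (MeasurePreserving.id _)
  have h2 := (mp2.integrable_comp h1.aestronglyMeasurable).2 h1
  have heq : ((myPhi a b c ∘ fun z : ℝ × ℝ => (z.1 - z.2, z.2)) ∘ fun z : ℝ × ℝ => (-z.1, z.2))
      = myPhi c b a := by
    funext p
    simp only [Function.comp_apply, myPhi]
    rw [show -p.1 - p.2 = -(p.1 + p.2) by ring, abs_neg,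
      show -(p.1 + p.2) + p.2 = -p.1 by ring, abs_neg]
    ring
  rwa [heq] at h2

lemma myKeyA {A B a e q : ℝ} (hA : 1 ≤ A) (hB : 1 ≤ B) (hAB : A ≤ B) (hq : a ≤ q) :
    A ^ (-a) * B ^ (-e) ≤ A ^ (-q) * B ^ (-(e - (q - a))) := by
  have hA0 : (0:ℝ) < A := lt_of_lt_of_le one_pos hA
  have hB0 : (0:ℝ) < B := lt_of_lt_of_le one_pos hB
  have e1 : A ^ (-q) * A ^ (q - a) = A ^ (-a) := by
    rw [← Real.rpow_add hA0, show -q + (q - a) = -a by ring]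
  have e2 : A ^ (q - a) ≤ B ^ (q - a) := Real.rpow_le_rpow hA0.le hAB (by linarith)
  calc A ^ (-a) * B ^ (-e) = A ^ (-q) * (A ^ (q-a) * B ^ (-e)) := by rw [← e1]; ring
    _ ≤ A ^ (-q) * (B ^ (q-a) * B ^ (-e)) := by
        have : A ^ (q-a) * B ^ (-e) ≤ B ^ (q-a) * B ^ (-e) :=
          mul_le_mul_of_nonneg_right e2 (by positivity)
        exact mul_le_mul_of_nonneg_left this (by positivity)
    _ = A ^ (-q) * B ^ (-(e - (q - a))) := by
        rw [← Real.rpow_add hB0, show q - a + -e = -(e - (q - a)) by ring]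

lemma myKeyB {A B e f q : ℝ} (hA : 1 ≤ A) (hB : 1 ≤ B) (hBA : B ≤ A) (hq : q ≤ e) :
    A ^ (-e) * B ^ (-f) ≤ A ^ (-q) * B ^ (-(f + (e - q))) := by
  have hA0 : (0:ℝ) < A := lt_of_lt_of_le one_pos hA
  have hB0 : (0:ℝ) < B := lt_of_lt_of_le one_pos hB
  have e1 : A ^ (-q) * A ^ (-(e - q)) = A ^ (-e) := by
    rw [← Real.rpow_add hA0, show -q + -(e - q) = -e by ring]
  have e2 : A ^ (-(e - q)) ≤ B ^ (-(e - q)) := myShift hB0 hBA (by linarith)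
  calc A ^ (-e) * B ^ (-f) = A ^ (-q) * (A ^ (-(e-q)) * B ^ (-f)) := by rw [← e1]; ring
    _ ≤ A ^ (-q) * (B ^ (-(e-q)) * B ^ (-f)) := by
        have : A ^ (-(e-q)) * B ^ (-f) ≤ B ^ (-(e-q)) * B ^ (-f) :=
          mul_le_mul_of_nonneg_right e2 (by positivity)
        exact mul_le_mul_of_nonneg_left this (by positivity)
    _ = A ^ (-q) * B ^ (-(f + (e - q))) := by
        rw [← Real.rpow_add hB0, show -(e - q) + -f = -(f + (e - q)) by ring]

lemma myRegY {a b c a₁ : ℝ} {y v : ℝ} (hyv : |y| ≤ |v|) (hys : |y| ≤ |y + v|) (haa : a ≤ a₁) :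
    myPhi a b c (y, v) ≤ 2 ^ |c| * ((|y| + 1) ^ (-a₁) * (|v| + 1) ^ (-(b + c - (a₁ - a)))) := by
  have hA0 : (0:ℝ) < |y| + 1 := by positivity
  have hB0 : (0:ℝ) < |v| + 1 := by positivity
  have hC0 : (0:ℝ) < |y + v| + 1 := by positivity
  have hs1 : |y + v| ≤ |y| + |v| := abs_add_le y v
  have hs2 : |v| ≤ |y + v| + |y| := by
    calc |v| = |y + v + -y| := by congr 1; ring
      _ ≤ |y + v| + |-y| := abs_add_le _ _
      _ = |y + v| + |y| := by rw [abs_neg]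
  have hCB : |y + v| + 1 ≤ 2 * (|v| + 1) := by linarith
  have hBC : |v| + 1 ≤ 2 * (|y + v| + 1) := by linarith
  have step1 : (|y + v| + 1) ^ (-c) ≤ 2 ^ |c| * (|v| + 1) ^ (-c) := myTwoComp hC0 hB0 hCB hBC
  calc myPhi a b c (y, v)
      ≤ (|y| + 1) ^ (-a) * (|v| + 1) ^ (-b) * (2 ^ |c| * (|v| + 1) ^ (-c)) := by
        exact mul_le_mul_of_nonneg_left step1 (by positivity)
    _ = 2 ^ |c| * ((|y| + 1) ^ (-a) * ((|v| + 1) ^ (-b) * (|v| + 1) ^ (-c))) := by ring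
    _ = 2 ^ |c| * ((|y| + 1) ^ (-a) * (|v| + 1) ^ (-(b + c))) := by
        rw [← Real.rpow_add hB0, show -b + -c = -(b + c) by ring]
    _ ≤ 2 ^ |c| * ((|y| + 1) ^ (-a₁) * (|v| + 1) ^ (-(b + c - (a₁ - a)))) := by
        have := myKeyA (by linarith : (1:ℝ) ≤ |y| + 1) (by linarith : (1:ℝ) ≤ |v| + 1)
          (by linarith : |y| + 1 ≤ |v| + 1) haa (e := b + c)
        exact mul_le_mul_of_nonneg_left this (by positivity)

lemma myRegV {a b c a₂ : ℝ} {y v : ℝ} (hvy : |v| ≤ |y|) (hvs : |v| ≤ |y + v|) (haa : a₂ ≤ a + c) :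
    myPhi a b c (y, v) ≤ 2 ^ |c| * ((|y| + 1) ^ (-a₂) * (|v| + 1) ^ (-(b + (a + c - a₂)))) := by
  have hA0 : (0:ℝ) < |y| + 1 := by positivity
  have hB0 : (0:ℝ) < |v| + 1 := by positivity
  have hC0 : (0:ℝ) < |y + v| + 1 := by positivity
  have hs1 : |y + v| ≤ |y| + |v| := abs_add_le y v
  have hs2 : |y| ≤ |y + v| + |v| := by
    calc |y| = |y + v + -v| := by congr 1; ring
      _ ≤ |y + v| + |-v| := abs_add_le _ _
      _ = |y + v| + |v| := by rw [abs_neg]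
  have hCA : |y + v| + 1 ≤ 2 * (|y| + 1) := by linarith
  have hAC : |y| + 1 ≤ 2 * (|y + v| + 1) := by linarith
  have step1 : (|y + v| + 1) ^ (-c) ≤ 2 ^ |c| * (|y| + 1) ^ (-c) := myTwoComp hC0 hA0 hCA hAC
  calc myPhi a b c (y, v)
      ≤ (|y| + 1) ^ (-a) * (|v| + 1) ^ (-b) * (2 ^ |c| * (|y| + 1) ^ (-c)) := by
        exact mul_le_mul_of_nonneg_left step1 (by positivity)
    _ = 2 ^ |c| * (((|y| + 1) ^ (-a) * (|y| + 1) ^ (-c)) * (|v| + 1) ^ (-b)) := by ring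
    _ = 2 ^ |c| * ((|y| + 1) ^ (-(a + c)) * (|v| + 1) ^ (-b)) := by
        rw [← Real.rpow_add hA0, show -a + -c = -(a + c) by ring]
    _ ≤ 2 ^ |c| * ((|y| + 1) ^ (-a₂) * (|v| + 1) ^ (-(b + (a + c - a₂)))) := by
        have := myKeyB (by linarith : (1:ℝ) ≤ |y| + 1) (by linarith : (1:ℝ) ≤ |v| + 1)
          (by linarith : |v| + 1 ≤ |y| + 1) haa (f := b)
        exact mul_le_mul_of_nonneg_left this (by positivity)

lemma myRegS {a b c p : ℝ} {y v : ℝ} (hsy : |y + v| ≤ |y|) (hsv : |y + v| ≤ |v|) (hp : p ≤ a + b) :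
    myPhi a b c (y, v) ≤ 2 ^ |a| * ((|v| + 1) ^ (-p) * (|y + v| + 1) ^ (-(c + (a + b - p)))) := by
  have hA0 : (0:ℝ) < |y| + 1 := by positivity
  have hB0 : (0:ℝ) < |v| + 1 := by positivity
  have hC0 : (0:ℝ) < |y + v| + 1 := by positivity
  have hs2 : |y| ≤ |y + v| + |v| := by
    calc |y| = |y + v + -v| := by congr 1; ring
      _ ≤ |y + v| + |-v| := abs_add_le _ _
      _ = |y + v| + |v| := by rw [abs_neg]
  have hs3 : |v| ≤ |y + v| + |y| := by
    calc |v| = |y + v + -y| := by congr 1; ring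
      _ ≤ |y + v| + |-y| := abs_add_le _ _
      _ = |y + v| + |y| := by rw [abs_neg]
  have hAB : |y| + 1 ≤ 2 * (|v| + 1) := by linarith
  have hBA : |v| + 1 ≤ 2 * (|y| + 1) := by linarith
  have step1 : (|y| + 1) ^ (-a) ≤ 2 ^ |a| * (|v| + 1) ^ (-a) := myTwoComp hA0 hB0 hAB hBA
  calc myPhi a b c (y, v)
      ≤ (2 ^ |a| * (|v| + 1) ^ (-a)) * (|v| + 1) ^ (-b) * (|y + v| + 1) ^ (-c) := by
        unfold myPhi
        have h1 : (0:ℝ) ≤ (|v| + 1) ^ (-b) := by positivity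
        have h2 : (0:ℝ) ≤ (|y + v| + 1) ^ (-c) := by positivity
        apply mul_le_mul_of_nonneg_right (mul_le_mul_of_nonneg_right step1 h1) h2
    _ = 2 ^ |a| * (((|v| + 1) ^ (-a) * (|v| + 1) ^ (-b)) * (|y + v| + 1) ^ (-c)) := by ring
    _ = 2 ^ |a| * ((|v| + 1) ^ (-(a + b)) * (|y + v| + 1) ^ (-c)) := by
        rw [← Real.rpow_add hB0, show -a + -b = -(a + b) by ring]
    _ ≤ 2 ^ |a| * ((|v| + 1) ^ (-p) * (|y + v| + 1) ^ (-(c + (a + b - p)))) := by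
        have := myKeyB (by linarith : (1:ℝ) ≤ |v| + 1) (by linarith : (1:ℝ) ≤ |y + v| + 1)
          (by linarith : |y + v| + 1 ≤ |v| + 1) hp (f := c)
        exact mul_le_mul_of_nonneg_left this (by positivity)

lemma mySuff {a b c : ℝ} (h1 : 1 < a + b) (h2 : 1 < a + c) (h3 : 1 < b + c)
    (h4 : 2 < a + b + c) : Integrable (myPhi a b c) := by
  set s : ℝ := a + b + c with hs
  set a₁ : ℝ := max a (s/2) with ha₁
  set b₁ : ℝ := b + c - (a₁ - a) with hb₁
  set a₂ : ℝ := min (a + c) (s/2) with ha₂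
  set b₂ : ℝ := b + (a + c - a₂) with hb₂
  set p₃ : ℝ := min (a + b) (s/2) with hp₃
  set q₃ : ℝ := c + (a + b - p₃) with hq₃
  have ha₁1 : 1 < a₁ := lt_of_lt_of_le (by linarith) (le_max_right a (s/2))
  have hb₁1 : 1 < b₁ := by
    have : a₁ < s - 1 := max_lt (by linarith) (by linarith)
    simp only [hb₁]; linarith
  have ha₂1 : 1 < a₂ := lt_min (by linarith) (by linarith)
  have hb₂1 : 1 < b₂ := by
    have : a₂ ≤ s/2 := min_le_right _ _
    simp only [hb₂]; linarith
  have hp₃1 : 1 < p₃ := lt_min (by linarith) (by linarith)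
  have hq₃1 : 1 < q₃ := by
    have : p₃ ≤ s/2 := min_le_right _ _
    simp only [hq₃]; linarith
  set F : ℝ × ℝ → ℝ := fun z =>
    2 ^ |c| * ((|z.1| + 1) ^ (-a₁) * (|z.2| + 1) ^ (-b₁)) +
    2 ^ |c| * ((|z.1| + 1) ^ (-a₂) * (|z.2| + 1) ^ (-b₂)) +
    2 ^ |a| * ((|z.2| + 1) ^ (-p₃) * (|z.1 + z.2| + 1) ^ (-q₃)) with hF
  have hFint : Integrable F :=
    (((myInt2d ha₁1 hb₁1).const_mul _).add ((myInt2d ha₂1 hb₂1).const_mul _)).add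
      ((myInt2d' hp₃1 hq₃1).const_mul _)
  apply Integrable.mono' hFint (myPhi_cont a b c).aestronglyMeasurable
  apply ae_of_all
  rintro ⟨y, v⟩
  rw [Real.norm_eq_abs, abs_of_nonneg (myPhi_nonneg a b c _)]
  have t1 : (0:ℝ) ≤ 2 ^ |c| * ((|y| + 1) ^ (-a₁) * (|v| + 1) ^ (-b₁)) := by positivity
  have t2 : (0:ℝ) ≤ 2 ^ |c| * ((|y| + 1) ^ (-a₂) * (|v| + 1) ^ (-b₂)) := by positivity
  have t3 : (0:ℝ) ≤ 2 ^ |a| * ((|v| + 1) ^ (-p₃) * (|y + v| + 1) ^ (-q₃)) := by positivity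
  have hY : |y| ≤ |v| → |y| ≤ |y + v| → myPhi a b c (y, v) ≤ F (y, v) := by
    intro hh1 hh2
    have := myRegY (b := b) (c := c) hh1 hh2 (le_max_left a (s/2))
    simp only [hF]; rw [← hb₁] at this; linarith
  have hV : |v| ≤ |y| → |v| ≤ |y + v| → myPhi a b c (y, v) ≤ F (y, v) := by
    intro hh1 hh2
    have := myRegV (b := b) hh1 hh2 (min_le_left (a + c) (s/2))
    simp only [hF]; rw [← ha₂, ← hb₂] at this; linarith
  have hS : |y + v| ≤ |y| → |y + v| ≤ |v| → myPhi a b c (y, v) ≤ F (y, v) := by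
    intro hh1 hh2
    have := myRegS (c := c) hh1 hh2 (min_le_left (a + b) (s/2))
    simp only [hF]; rw [← hp₃, ← hq₃] at this; linarith
  rcases le_total |y| |v| with hyv | hyv
  · rcases le_total |y| |y + v| with hys | hys
    · exact hY hyv hys
    · exact hS hys (le_trans hys hyv)
  · rcases le_total |v| |y + v| with hvs | hvs
    · exact hV hyv hvs
    · exact hS (le_trans hvs hyv) hvs

lemma myLower {K X Y : ℝ} (h : X ≤ 2 ^ K * Y) : 2 ^ (-K) * X ≤ Y := by
  have h2 : (0:ℝ) < 2 ^ K := Real.rpow_pos_of_pos (by norm_num) K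
  rw [Real.rpow_neg (by norm_num : (0:ℝ) ≤ 2)]
  exact (inv_mul_le_iff₀ h2).2 h

lemma myUnconst {κ : ℝ} (hκ : κ ≠ 0) {f : ℝ → ℝ} {μ : Measure ℝ}
    (h : Integrable (fun x => κ * f x) μ) : Integrable f μ := by
  have h2 := h.const_mul κ⁻¹
  simpa [← mul_assoc, inv_mul_cancel₀ hκ] using h2

lemma mySliceNonInt {b c y : ℝ} (h : b + c ≤ 1) :
    ¬ Integrable (fun v : ℝ => (|v| + 1) ^ (-b) * (|y + v| + 1) ^ (-c)) := by
  intro hint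
  set M : ℝ := max 1 (2 * |y|) with hM
  have hM0 : (0:ℝ) < M := lt_of_lt_of_le one_pos (le_max_left _ _)
  have hIoi := hint.integrableOn (s := Ioi M)
  set ε : ℝ := 2 ^ (-|c|) * 2 ^ (-|b + c|) with hε
  have hε0 : 0 < ε := by positivity
  have key : ∀ v ∈ Ioi M, ε * v ^ (-(1:ℝ)) ≤ (|v| + 1) ^ (-b) * (|y + v| + 1) ^ (-c) := by
    intro v hv
    have hv1 : (1:ℝ) < v := lt_of_le_of_lt (le_max_left _ _) hv
    have hvy : 2 * |y| < v := lt_of_le_of_lt (le_max_right _ _) hv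
    have hv0 : (0:ℝ) < v := by linarith
    have havy : |y| ≤ v / 2 := by linarith
    have habs : |v| = v := abs_of_pos hv0
    have hyv1 : |y + v| + 1 ≤ 2 * (|v| + 1) := by
      have := abs_add_le y v
      rw [habs]; linarith [abs_nonneg y]
    have hyv2 : |v| + 1 ≤ 2 * (|y + v| + 1) := by
      have h1 : v - |y| ≤ y + v := by have := neg_abs_le y; linarith
      have h2 : v / 2 ≤ y + v := by linarith
      have h3 : v / 2 ≤ |y + v| := le_trans h2 (le_abs_self _)
      rw [habs]; linarith
    have hB0 : (0:ℝ) < |v| + 1 := by positivity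
    have hC0 : (0:ℝ) < |y + v| + 1 := by positivity
    have step1 : 2 ^ (-|c|) * (|v| + 1) ^ (-c) ≤ (|y + v| + 1) ^ (-c) :=
      myLower (myTwoComp hB0 hC0 hyv2 hyv1)
    have step2 : 2 ^ (-|b + c|) * v ^ (-(b + c)) ≤ (|v| + 1) ^ (-(b + c)) := by
      apply myLower
      apply myTwoComp hv0 hB0
      · rw [habs]; linarith
      · rw [habs]; linarith
    have step3 : v ^ (-(1:ℝ)) ≤ v ^ (-(b + c)) :=
      Real.rpow_le_rpow_of_exponent_le (by linarith) (by linarith)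
    calc ε * v ^ (-(1:ℝ)) ≤ ε * v ^ (-(b + c)) := by
          exact mul_le_mul_of_nonneg_left step3 hε0.le
      _ = 2 ^ (-|c|) * (2 ^ (-|b + c|) * v ^ (-(b + c))) := by rw [hε]; ring
      _ ≤ 2 ^ (-|c|) * (|v| + 1) ^ (-(b + c)) := by
          exact mul_le_mul_of_nonneg_left step2 (by positivity)
      _ = 2 ^ (-|c|) * ((|v| + 1) ^ (-b) * (|v| + 1) ^ (-c)) := by
          rw [← Real.rpow_add hB0, show -b + -c = -(b + c) by ring]
      _ = (|v| + 1) ^ (-b) * (2 ^ (-|c|) * (|v| + 1) ^ (-c)) := by ring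
      _ ≤ (|v| + 1) ^ (-b) * (|y + v| + 1) ^ (-c) := by
          exact mul_le_mul_of_nonneg_left step1 (by positivity)
  have hmint : IntegrableOn (fun v : ℝ => ε * v ^ (-(1:ℝ))) (Ioi M) := by
    apply Integrable.mono' hIoi
    · apply ContinuousOn.aestronglyMeasurable _ measurableSet_Ioi
      apply ContinuousOn.mul continuousOn_const
      apply ContinuousOn.rpow_const continuousOn_id
      intro v hv
      exact Or.inl (ne_of_gt (lt_trans hM0 hv))
    · rw [ae_restrict_iff' measurableSet_Ioi]
      apply ae_of_all
      intro v hv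
      have hv0 : (0:ℝ) < v := lt_trans hM0 hv
      rw [Real.norm_eq_abs, abs_of_nonneg (by positivity)]
      exact key v hv
  have := (integrableOn_Ioi_rpow_iff hM0).1 (myUnconst (ne_of_gt hε0) hmint)
  linarith

lemma myNec1 {a b c : ℝ} (h : Integrable (myPhi a b c)) : 1 < b + c := by
  by_contra hbc
  push_neg at hbc
  rw [MeasureTheory.Measure.volume_eq_prod] at h
  have hae := h.prod_right_ae
  have hne : (MeasureTheory.ae (volume : Measure ℝ)).NeBot := by
    refine ae_neBot.2 ?_
    intro h0
    have := congrArg (fun μ : Measure ℝ => μ (Icc (0:ℝ) 1)) h0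
    simp [Real.volume_Icc] at this
  obtain ⟨y, hy⟩ := hae.exists
  have h0 : (0:ℝ) < |y| + 1 := by positivity
  have hy2 : Integrable (fun v : ℝ => (|v| + 1) ^ (-b) * (|y + v| + 1) ^ (-c)) volume := by
    have h3 := hy.const_mul ((|y| + 1) ^ a)
    have hone : (|y| + 1) ^ a * (|y| + 1) ^ (-a) = 1 := by
      rw [← Real.rpow_add h0]; simp
    have heq : (fun v : ℝ => (|y| + 1) ^ a * myPhi a b c (y, v)) =
        fun v : ℝ => (|v| + 1) ^ (-b) * (|y + v| + 1) ^ (-c) := by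
      funext v
      show (|y| + 1) ^ a * ((|y| + 1) ^ (-a) * (|v| + 1) ^ (-b) * (|y + v| + 1) ^ (-c)) = _
      rw [show (|y| + 1) ^ a * ((|y| + 1) ^ (-a) * (|v| + 1) ^ (-b) * (|y + v| + 1) ^ (-c))
        = ((|y| + 1) ^ a * (|y| + 1) ^ (-a)) * ((|v| + 1) ^ (-b) * (|y + v| + 1) ^ (-c)) by ring,
        hone, one_mul]
    rw [heq] at h3
    exact h3
  exact mySliceNonInt hbc hy2

lemma myMain {a b c y : ℝ} (hb : b < 1) (hac : 0 < a + c) (hy2 : 2 ≤ y)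
    (hyR : (2:ℝ) ^ (1 - b)⁻¹ ≤ y)
    (hy : Integrable (fun v => myPhi a b c (y, v)) volume) :
    (2 ^ (-|c|) * 2 ^ (-|b|) * 2 ^ (-(a + c)) / (2 * (1 - b))) * y ^ (-(a + c) + (1 - b))
      ≤ ∫ v, ‖myPhi a b c (y, v)‖ := by
  have hy0 : (0:ℝ) < y := by linarith
  have h1b : (0:ℝ) < 1 - b := by linarith
  set K1 : ℝ := 2 ^ (-|c|) * (y + 1) ^ (-(a + c)) with hK1
  have hK10 : 0 < K1 := by positivity
  -- pointwise lower bound on Ioc 1 y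
  have step1 : ∀ v ∈ Ioc (1:ℝ) y, K1 * (v + 1) ^ (-b) ≤ ‖myPhi a b c (y, v)‖ := by
    intro v hv
    obtain ⟨hv1, hvy⟩ := hv
    have hv0 : (0:ℝ) < v := by linarith
    have hay : |y| = y := abs_of_pos hy0
    have hav : |v| = v := abs_of_pos hv0
    have hays : |y + v| = y + v := abs_of_pos (by linarith)
    have hC1 : y + 1 ≤ 2 * (y + v + 1) := by linarith
    have hC2 : y + v + 1 ≤ 2 * (y + 1) := by linarith
    have hcomp : 2 ^ (-|c|) * (y + 1) ^ (-c) ≤ (y + v + 1) ^ (-c) :=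
      myLower (myTwoComp (by linarith) (by linarith) hC1 hC2)
    rw [Real.norm_eq_abs, abs_of_nonneg (myPhi_nonneg a b c _)]
    show K1 * (v + 1) ^ (-b) ≤ (|y| + 1) ^ (-a) * (|v| + 1) ^ (-b) * (|y + v| + 1) ^ (-c)
    rw [hay, hav, hays]
    calc K1 * (v + 1) ^ (-b)
        = 2 ^ (-|c|) * ((y + 1) ^ (-a) * (y + 1) ^ (-c)) * (v + 1) ^ (-b) := by
          rw [hK1, ← Real.rpow_add (by linarith : (0:ℝ) < y + 1),
            show -a + -c = -(a + c) by ring]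
      _ = (y + 1) ^ (-a) * (v + 1) ^ (-b) * (2 ^ (-|c|) * (y + 1) ^ (-c)) := by ring
      _ ≤ (y + 1) ^ (-a) * (v + 1) ^ (-b) * (y + v + 1) ^ (-c) := by
          exact mul_le_mul_of_nonneg_left hcomp (by positivity)
  -- integrability of the comparison functions on Ioc 1 y
  have hcont : ∀ d : ℝ, IntegrableOn (fun v : ℝ => (v + 1) ^ (-d)) (Ioc 1 y) := by
    intro d
    apply IntegrableOn.mono_set _ Ioc_subset_Icc_self
    apply ContinuousOn.integrableOn_Icc
    apply ContinuousOn.rpow_const (by fun_prop)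
    intro v hv
    have : (1:ℝ) ≤ v := hv.1
    exact Or.inl (by positivity)
  have hcont2 : IntegrableOn (fun v : ℝ => v ^ (-b)) (Ioc 1 y) := by
    apply IntegrableOn.mono_set _ Ioc_subset_Icc_self
    apply ContinuousOn.integrableOn_Icc
    apply ContinuousOn.rpow_const (by fun_prop)
    intro v hv
    have : (1:ℝ) ≤ v := hv.1
    exact Or.inl (by positivity)
  -- chain of integral inequalities
  have hnorm_int : Integrable (fun v => ‖myPhi a b c (y, v)‖) volume := hy.norm
  have I2 : ∫ v in Ioc (1:ℝ) y, ‖myPhi a b c (y, v)‖ ≤ ∫ v, ‖myPhi a b c (y, v)‖ :=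
    setIntegral_le_integral hnorm_int (ae_of_all _ fun v => norm_nonneg _)
  have I1 : ∫ v in Ioc (1:ℝ) y, K1 * (v + 1) ^ (-b) ≤ ∫ v in Ioc (1:ℝ) y, ‖myPhi a b c (y, v)‖ :=
    setIntegral_mono_on ((hcont b).const_mul K1) hnorm_int.integrableOn measurableSet_Ioc step1
  have I3 : ∫ v in Ioc (1:ℝ) y, K1 * (v + 1) ^ (-b) = K1 * ∫ v in Ioc (1:ℝ) y, (v + 1) ^ (-b) :=
    integral_const_mul K1 _
  -- lower bound the inner integral
  have I4 : ∀ v ∈ Ioc (1:ℝ) y, 2 ^ (-|b|) * v ^ (-b) ≤ (v + 1) ^ (-b) := by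
    intro v hv
    have hv1 : (1:ℝ) ≤ v := hv.1.le
    apply myLower
    apply myTwoComp (by linarith) (by linarith)
    · linarith
    · linarith
  have I5 : ∫ v in Ioc (1:ℝ) y, 2 ^ (-|b|) * v ^ (-b) ≤ ∫ v in Ioc (1:ℝ) y, (v + 1) ^ (-b) :=
    setIntegral_mono_on (hcont2.const_mul _) (hcont b) measurableSet_Ioc I4
  have I6 : ∫ v in Ioc (1:ℝ) y, 2 ^ (-|b|) * v ^ (-b)
      = 2 ^ (-|b|) * ((y ^ (1 - b) - 1) / (1 - b)) := by
    rw [integral_const_mul]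
    congr 1
    rw [← intervalIntegral.integral_of_le (by linarith : (1:ℝ) ≤ y),
      integral_rpow (Or.inl (by linarith : (-1:ℝ) < -b))]
    rw [Real.one_rpow, show -b + 1 = 1 - b by ring]
  -- numeric bound: y ^ (1-b) ≥ 2
  have h2le : (2:ℝ) ≤ y ^ (1 - b) := by
    calc (2:ℝ) = ((2:ℝ) ^ (1 - b)⁻¹) ^ (1 - b) := by
          rw [← Real.rpow_mul (by norm_num : (0:ℝ) ≤ 2), inv_mul_cancel₀ (ne_of_gt h1b)]
          norm_num
      _ ≤ y ^ (1 - b) := Real.rpow_le_rpow (by positivity) hyR h1b.le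
  have I7 : y ^ (1 - b) / (2 * (1 - b)) ≤ (y ^ (1 - b) - 1) / (1 - b) := by
    rw [div_le_div_iff₀ (by linarith) h1b]
    nlinarith
  -- bound K1 from below
  have I8 : 2 ^ (-(a + c)) * y ^ (-(a + c)) ≤ (y + 1) ^ (-(a + c)) := by
    rw [← Real.mul_rpow (by norm_num) hy0.le]
    exact Real.rpow_le_rpow_of_nonpos (by linarith) (by linarith) (by linarith)
  -- put everything together
  have core : (2 ^ (-|c|) * (2 ^ (-(a + c)) * y ^ (-(a + c)))) *
      (2 ^ (-|b|) * (y ^ (1 - b) / (2 * (1 - b)))) ≤ ∫ v, ‖myPhi a b c (y, v)‖ := by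
    have c1 : (2:ℝ) ^ (-|c|) * (2 ^ (-(a + c)) * y ^ (-(a + c))) ≤ K1 :=
      mul_le_mul_of_nonneg_left I8 (by positivity)
    have c2 : (2:ℝ) ^ (-|b|) * (y ^ (1 - b) / (2 * (1 - b)))
        ≤ ∫ v in Ioc (1:ℝ) y, (v + 1) ^ (-b) := by
      calc (2:ℝ) ^ (-|b|) * (y ^ (1 - b) / (2 * (1 - b)))
          ≤ 2 ^ (-|b|) * ((y ^ (1 - b) - 1) / (1 - b)) :=
            mul_le_mul_of_nonneg_left I7 (by positivity)
        _ = ∫ v in Ioc (1:ℝ) y, 2 ^ (-|b|) * v ^ (-b) := I6.symm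
        _ ≤ _ := I5
    have hint_nonneg : (0:ℝ) ≤ ∫ v in Ioc (1:ℝ) y, (v + 1) ^ (-b) := by
      apply setIntegral_nonneg measurableSet_Ioc
      intro v hv
      exact Real.rpow_nonneg (by linarith [hv.1]) _
    calc (2 ^ (-|c|) * (2 ^ (-(a + c)) * y ^ (-(a + c)))) *
        (2 ^ (-|b|) * (y ^ (1 - b) / (2 * (1 - b))))
        ≤ K1 * ∫ v in Ioc (1:ℝ) y, (v + 1) ^ (-b) := by
          exact mul_le_mul c1 c2 (mul_nonneg (by positivity) (div_nonneg (by positivity) (by linarith))) hK10.le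
      _ = ∫ v in Ioc (1:ℝ) y, K1 * (v + 1) ^ (-b) := I3.symm
      _ ≤ ∫ v in Ioc (1:ℝ) y, ‖myPhi a b c (y, v)‖ := I1
      _ ≤ ∫ v, ‖myPhi a b c (y, v)‖ := I2
  calc (2 ^ (-|c|) * 2 ^ (-|b|) * 2 ^ (-(a + c)) / (2 * (1 - b))) * y ^ (-(a + c) + (1 - b))
      = (2 ^ (-|c|) * (2 ^ (-(a + c)) * y ^ (-(a + c)))) *
        (2 ^ (-|b|) * (y ^ (1 - b) / (2 * (1 - b)))) := by
        rw [Real.rpow_add hy0]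
        ring
    _ ≤ _ := core

lemma myNec2 {a b c : ℝ} (h : Integrable (myPhi a b c)) (hac : 1 < a + c)
    (hsum : a + b + c ≤ 2) : False := by
  have hb : b < 1 := by linarith
  have h1b : (0:ℝ) < 1 - b := by linarith
  rw [MeasureTheory.Measure.volume_eq_prod] at h
  obtain ⟨hae, hInt⟩ := (integrable_prod_iff (myPhi_cont a b c).aestronglyMeasurable).1 h
  set R : ℝ := max 2 ((2:ℝ) ^ (1 - b)⁻¹) with hR
  have hR2 : (2:ℝ) ≤ R := le_max_left _ _
  have hR0 : (0:ℝ) < R := by linarith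
  set κ : ℝ := 2 ^ (-|c|) * 2 ^ (-|b|) * 2 ^ (-(a + c)) / (2 * (1 - b)) with hκ
  have hκ0 : 0 < κ := by positivity
  have hbd : ∀ᵐ y : ℝ, ‖(Ioi R).indicator (fun y : ℝ => κ * y⁻¹) y‖
      ≤ ∫ v, ‖myPhi a b c (y, v)‖ := by
    filter_upwards [hae] with y hy
    by_cases hmem : y ∈ Ioi R
    · have hRy : R < y := hmem
      have hy0 : (0:ℝ) < y := lt_trans hR0 hmem
      rw [indicator_of_mem hmem, Real.norm_eq_abs, abs_of_nonneg (by positivity)]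
      have hm := myMain hb (by linarith) (le_trans hR2 hmem.le)
        (le_trans (le_max_right _ _) hmem.le) hy
      calc κ * y⁻¹ = κ * y ^ (-(1:ℝ)) := by rw [show -(1:ℝ) = (-1:ℝ) by norm_num, Real.rpow_neg_one]
        _ ≤ κ * y ^ (-(a + c) + (1 - b)) := by
            apply mul_le_mul_of_nonneg_left _ hκ0.le
            apply Real.rpow_le_rpow_of_exponent_le (by linarith)
            linarith
        _ ≤ _ := hm
    · rw [indicator_of_notMem hmem]
      simp only [norm_zero]
      exact integral_nonneg fun v => norm_nonneg _
  have hmeas : AEStronglyMeasurable ((Ioi R).indicator fun y : ℝ => κ * y⁻¹)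
      (volume : Measure ℝ) := by
    apply AEStronglyMeasurable.indicator _ measurableSet_Ioi
    exact (measurable_inv.const_mul κ).aestronglyMeasurable
  have hind := Integrable.mono' hInt hmeas hbd
  rw [integrable_indicator_iff measurableSet_Ioi] at hind
  have hinv : IntegrableOn (fun y : ℝ => y⁻¹) (Ioi R) := myUnconst (ne_of_gt hκ0) hind
  have hrpow : IntegrableOn (fun y : ℝ => y ^ (-1:ℝ)) (Ioi R) := by
    apply hinv.congr_fun _ measurableSet_Ioi
    intro y hy
    exact (Real.rpow_neg_one y).symm
  have := (integrableOn_Ioi_rpow_iff hR0).1 hrpow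
  linarith

theorem stmt_0 (a b c : ℝ) :
    MeasureTheory.Integrable
      (fun p : ℝ × ℝ => (|p.1| + 1) ^ (-a) * (|p.2| + 1) ^ (-b) * (|p.1 + p.2| + 1) ^ (-c)) ↔
    (1 < a + b ∧ 1 < a + c ∧ 1 < b + c ∧ 2 < a + b + c) := by
  have hphi : (fun p : ℝ × ℝ => (|p.1| + 1) ^ (-a) * (|p.2| + 1) ^ (-b) * (|p.1 + p.2| + 1) ^ (-c))
      = myPhi a b c := rfl
  rw [hphi]
  constructor
  · intro h
    have hbc := myNec1 h
    have hac := myNec1 (mySymSwap h)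
    have hab := myNec1 (mySymShear h)
    refine ⟨by linarith, hac, hbc, ?_⟩
    by_contra hsum
    push_neg at hsum
    exact myNec2 h hac hsum
  · rintro ⟨h1, h2, h3, h4⟩
    exact mySuff h1 h2 h3 h4
end

section
/- For real constants $a, b, c$ with $a+c>1$, $b+c>1$ and $a+b+c>2$, the function $\phi(y,v) = (|y|+1)^{-a}(|v|+1)^{-b}(|y+v|+1)^{-c}$ is integrable over the quarter plane $\mathbb{R}_+^2 = (0,\infty)^2$. -/
open MeasureTheory Set Real

lemma int1d {r : ℝ} (hr : 1 < r) :
    IntegrableOn (fun x : ℝ => (x + 1) ^ (-r)) (Ioi (0:ℝ)) := by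
  have h : IntegrableOn (fun x : ℝ => x ^ (-r)) (Ioi (1:ℝ)) :=
    integrableOn_Ioi_rpow_of_lt (by linarith) one_pos
  have hmp : MeasurePreserving (fun x : ℝ => x + 1) volume volume :=
    measurePreserving_add_right volume 1
  have := (hmp.integrableOn_comp_preimage
    (MeasurableEquiv.addRight (1:ℝ)).measurableEmbedding
    (f := fun x : ℝ => x ^ (-r)) (s := Ioi (1:ℝ))).2 h
  have hpre : (fun x : ℝ => x + 1) ⁻¹' Ioi (1:ℝ) = Ioi 0 := by
    ext x; simp [mem_Ioi]
  rwa [hpre] at this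

lemma prodInt {r s : ℝ} (hr : 1 < r) (hs : 1 < s) :
    IntegrableOn (fun p : ℝ × ℝ => (p.1 + 1) ^ (-r) * (p.2 + 1) ^ (-s))
      (Ioi (0:ℝ) ×ˢ Ioi (0:ℝ)) := by
  rw [IntegrableOn, Measure.volume_eq_prod, ← Measure.prod_restrict]
  exact (int1d hr).mul_prod (int1d hs)

lemma mainAux (a b c r s : ℝ) (hr : 1 < r) (hs : 1 < s)
    (hb : ∀ y v : ℝ, 0 < y → 0 < v →
      (y + 1) ^ (-a) * (v + 1) ^ (-b) * (y + v + 1) ^ (-c)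
        ≤ (y + 1) ^ (-r) * (v + 1) ^ (-s)) :
    MeasureTheory.IntegrableOn
      (fun p : ℝ × ℝ => (|p.1| + 1) ^ (-a) * (|p.2| + 1) ^ (-b) * (|p.1 + p.2| + 1) ^ (-c))
      (Set.Ioi 0 ×ˢ Set.Ioi 0) := by
  apply (prodInt hr hs).mono' ?_ ?_
  · apply Measurable.aestronglyMeasurable
    fun_prop
  · filter_upwards [self_mem_ae_restrict ((measurableSet_Ioi).prod measurableSet_Ioi)]
      with p hp
    obtain ⟨hy, hv⟩ := hp
    simp only [mem_Ioi] at hy hv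
    have h1 : (0:ℝ) < |p.1| + 1 := by positivity
    have h2 : (0:ℝ) < |p.2| + 1 := by positivity
    have h3 : (0:ℝ) < |p.1 + p.2| + 1 := by positivity
    rw [Real.norm_eq_abs, abs_of_nonneg (by positivity)]
    rw [abs_of_pos hy, abs_of_pos hv, abs_of_pos (by linarith : (0:ℝ) < p.1 + p.2)]
    exact hb p.1 p.2 hy hv

theorem stmt_1 (a b c : ℝ) (hac : 1 < a + c) (hbc : 1 < b + c) (habc : 2 < a + b + c) :
    MeasureTheory.IntegrableOn
      (fun p : ℝ × ℝ => (|p.1| + 1) ^ (-a) * (|p.2| + 1) ^ (-b) * (|p.1 + p.2| + 1) ^ (-c))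
      (Set.Ioi 0 ×ˢ Set.Ioi 0) := by
  rcases le_or_gt c 0 with hc | hc
  · -- c ≤ 0 : use (y+v+1) ≤ (y+1)(v+1)
    apply mainAux a b c (a + c) (b + c) hac hbc
    intro y v hy hv
    have hy1 : (0:ℝ) < y + 1 := by linarith
    have hv1 : (0:ℝ) < v + 1 := by linarith
    have key : (y + v + 1) ^ (-c) ≤ (y + 1) ^ (-c) * (v + 1) ^ (-c) := by
      rw [← Real.mul_rpow hy1.le hv1.le]
      apply Real.rpow_le_rpow (by linarith) (by nlinarith) (by linarith)
    calc (y + 1) ^ (-a) * (v + 1) ^ (-b) * (y + v + 1) ^ (-c)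
        ≤ (y + 1) ^ (-a) * (v + 1) ^ (-b) * ((y + 1) ^ (-c) * (v + 1) ^ (-c)) := by
          apply mul_le_mul_of_nonneg_left key (by positivity)
      _ = (y + 1) ^ (-(a + c)) * (v + 1) ^ (-(b + c)) := by
          rw [neg_add, neg_add, Real.rpow_add hy1, Real.rpow_add hv1]; ring
  · -- c > 0 : interpolate
    set L := max 0 ((1 - a) / c) with hL
    set U := min 1 ((b + c - 1) / c) with hU
    have hLU : L < U := by
      apply max_lt
      · exact lt_min one_pos (div_pos (by linarith) hc)
      · apply lt_min
        · rw [div_lt_one hc]; linarith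
        · exact (div_lt_div_iff_of_pos_right hc).2 (by linarith)
    set θ := (L + U) / 2 with hθ
    have hLθ : L < θ := by rw [hθ]; linarith
    have hθU : θ < U := by rw [hθ]; linarith
    have hθ0 : 0 ≤ θ := le_of_lt (lt_of_le_of_lt (le_max_left _ _) hLθ)
    have hθ1 : θ ≤ 1 := le_of_lt (lt_of_lt_of_le hθU (min_le_left _ _))
    have hr : 1 < a + θ * c := by
      have : (1 - a) / c < θ := lt_of_le_of_lt (le_max_right _ _) hLθ
      rw [div_lt_iff₀ hc] at this; linarith
    have hs : 1 < b + (1 - θ) * c := by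
      have : θ < (b + c - 1) / c := lt_of_lt_of_le hθU (min_le_right _ _)
      rw [lt_div_iff₀ hc] at this; linarith
    apply mainAux a b c (a + θ * c) (b + (1 - θ) * c) hr hs
    intro y v hy hv
    have hy1 : (0:ℝ) < y + 1 := by linarith
    have hv1 : (0:ℝ) < v + 1 := by linarith
    have hgm : (y + 1) ^ θ * (v + 1) ^ (1 - θ) ≤ y + v + 1 := by
      calc (y + 1) ^ θ * (v + 1) ^ (1 - θ)
          ≤ θ * (y + 1) + (1 - θ) * (v + 1) :=
            Real.geom_mean_le_arith_mean2_weighted hθ0 (by linarith) hy1.le hv1.le (by ring)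
        _ ≤ y + v + 1 := by nlinarith
    have hgm0 : 0 < (y + 1) ^ θ * (v + 1) ^ (1 - θ) := by positivity
    have key : (y + v + 1) ^ (-c) ≤ (y + 1) ^ (-(θ * c)) * (v + 1) ^ (-((1 - θ) * c)) := by
      have := Real.rpow_le_rpow_of_nonpos hgm0 hgm (by linarith : -c ≤ 0)
      rw [Real.mul_rpow (by positivity) (by positivity), ← Real.rpow_mul hy1.le,
        ← Real.rpow_mul hv1.le] at this
      calc (y + v + 1) ^ (-c) ≤ (y+1) ^ (θ * -c) * (v+1) ^ ((1-θ) * -c) := this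
        _ = (y + 1) ^ (-(θ * c)) * (v + 1) ^ (-((1 - θ) * c)) := by ring_nf
    calc (y + 1) ^ (-a) * (v + 1) ^ (-b) * (y + v + 1) ^ (-c)
        ≤ (y + 1) ^ (-a) * (v + 1) ^ (-b) * ((y + 1) ^ (-(θ * c)) * (v + 1) ^ (-((1 - θ) * c))) :=
          mul_le_mul_of_nonneg_left key (by positivity)
      _ = (y + 1) ^ (-(a + θ * c)) * (v + 1) ^ (-(b + (1 - θ) * c)) := by
          rw [neg_add, neg_add, Real.rpow_add hy1, Real.rpow_add hv1]; ring
end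

section
/- Suppose the prime-pair constants satisfy $S_m = \sum_{r=1}^m C_{2r} = m - (1/2)\log m + O(\log^{2/3}(m+1))$. Let $E : [0,1] \to \mathbb{R}$ be absolutely continuous with $E'$ of bounded variation, $E(0)=1$, $E(1)=0$. Then the weighted residue $R^E(1/2,\lambda) = 2\sum_{0 < 2r \le \lambda} E(2r/\lambda) C_{2r} - \lambda \int_0^1 E(\nu)\, d\nu$ satisfies $R^E(1/2,\lambda) = O(\log \lambda)$ as $\lambda \to \infty$. -/
open MeasureTheory

noncomputable def twinPrimeConst : ℝ :=
  ∏' p : {p : ℕ // p.Prime ∧ 2 < p}, ((1 : ℝ) - 1 / ((p.1 : ℝ) - 1) ^ 2)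

noncomputable def primePairConst (r : ℕ) : ℝ :=
  twinPrimeConst *
    ∏ p ∈ Finset.filter (fun p => 2 < p) r.primeFactors, (((p : ℝ) - 1) / ((p : ℝ) - 2))

lemma abel_aux (f ρ : ℕ → ℝ) (h0 : ρ 0 = 0) (m : ℕ) :
    ∑ r ∈ Finset.Icc 1 m, f r * (ρ r - ρ (r - 1)) =
      f m * ρ m + ∑ r ∈ Finset.Icc 1 (m - 1), (f r - f (r + 1)) * ρ r := by
  induction m with
  | zero => simp [h0]
  | succ n ih =>
    rw [Finset.sum_Icc_succ_top (by omega : 1 ≤ n + 1)]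
    rw [ih]
    match n with
    | 0 => simp [h0]
    | k + 1 =>
      rw [show k + 1 + 1 - 1 = (k + 1 - 1) + 1 by omega,
        Finset.sum_Icc_succ_top (by omega : 1 ≤ k + 1 - 1 + 1),
        show k + 1 - 1 + 1 = k + 1 by omega]
      simp only [Nat.add_sub_cancel]
      ring

set_option maxHeartbeats 1600000 in
theorem stmt_14
    (hS : ∃ K : ℝ, ∀ m : ℕ, 1 ≤ m →
      |(∑ r ∈ Finset.Icc 1 m, primePairConst r) - ((m : ℝ) - (1 / 2) * Real.log m)|
        ≤ K * (Real.log ((m : ℝ) + 1)) ^ ((2 : ℝ) / 3))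
    (E g : ℝ → ℝ)
    (hg : MeasureTheory.IntegrableOn g (Set.Icc 0 1))
    (hAC : ∀ x ∈ Set.Icc (0 : ℝ) 1, E x = E 0 + ∫ t in (0 : ℝ)..x, g t)
    (hBV : BoundedVariationOn g (Set.Icc 0 1))
    (hE0 : E 0 = 1) (hE1 : E 1 = 0) :
    ∃ K' : ℝ, ∀ lam : ℝ, 2 ≤ lam →
      |2 * (∑ r ∈ Finset.Icc 1 ⌊lam / 2⌋₊, E (2 * r / lam) * primePairConst r)
          - lam * ∫ ν in (0 : ℝ)..1, E ν|
        ≤ K' * Real.log lam := by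
  obtain ⟨K, hK⟩ := hS
  -- K is nonnegative
  have hK0 : 0 ≤ K := by
    have h1 := hK 1 le_rfl
    have hp : (0:ℝ) < (Real.log ((1:ℕ) + 1)) ^ ((2:ℝ)/3) := by
      apply Real.rpow_pos_of_pos
      rw [show ((1:ℕ):ℝ) + 1 = 2 by norm_num]
      exact Real.log_pos one_lt_two
    nlinarith [abs_nonneg ((∑ r ∈ Finset.Icc 1 1, primePairConst r) -
      (((1:ℕ) : ℝ) - (1 / 2) * Real.log (1:ℕ)))]
  set G : ℝ := |g 0| + (eVariationOn g (Set.Icc 0 1)).toReal with hGdef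
  have hG0 : 0 ≤ G := add_nonneg (abs_nonneg _) ENNReal.toReal_nonneg
  have hgb : ∀ x ∈ Set.Icc (0:ℝ) 1, |g x| ≤ G := by
    intro x hx
    have h1 : edist (g x) (g 0) ≤ eVariationOn g (Set.Icc 0 1) :=
      eVariationOn.edist_le g hx (by constructor <;> norm_num)
    have h2 : dist (g x) (g 0) ≤ (eVariationOn g (Set.Icc 0 1)).toReal := by
      rw [dist_edist]; exact ENNReal.toReal_mono hBV h1
    rw [Real.dist_eq] at h2
    have := abs_sub_abs_le_abs_sub (g x) (g 0)
    rw [hGdef]; linarith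
  have hInt : ∀ a b : ℝ, a ∈ Set.Icc (0:ℝ) 1 → b ∈ Set.Icc (0:ℝ) 1 →
      IntervalIntegrable g volume a b := by
    intro a b ha hb
    rw [intervalIntegrable_iff]
    exact hg.mono_set (Set.uIoc_subset_uIcc.trans (Set.uIcc_subset_Icc ha hb))
  have hLip : ∀ a b : ℝ, a ∈ Set.Icc (0:ℝ) 1 → b ∈ Set.Icc (0:ℝ) 1 →
      |E b - E a| ≤ G * |b - a| := by
    intro a b ha hb
    have hsub : E b - E a = ∫ t in a..b, g t := by
      rw [hAC b hb, hAC a ha]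
      rw [add_sub_add_left_eq_sub]
      exact intervalIntegral.integral_interval_sub_left (hInt 0 b (by norm_num) hb)
        (hInt 0 a (by norm_num) ha)
    rw [hsub, ← Real.norm_eq_abs]
    apply intervalIntegral.norm_integral_le_of_norm_le_const
    intro x hxm
    have hxI : x ∈ Set.Icc (0:ℝ) 1 :=
      (Set.uIoc_subset_uIcc.trans (Set.uIcc_subset_Icc ha hb)) hxm
    exact hgb x hxI
  have hEb : ∀ x ∈ Set.Icc (0:ℝ) 1, |E x| ≤ 1 + G := by
    intro x hx
    have h1 := hLip 0 x (by norm_num) hx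
    rw [hE0] at h1
    have hx1 : |x - 0| ≤ 1 := by
      rw [sub_zero, abs_of_nonneg hx.1]; exact hx.2
    have : |E x| - 1 ≤ |E x - 1| := by
      have := abs_sub_abs_le_abs_sub (E x) (1:ℝ)
      simpa using this
    nlinarith [mul_le_mul_of_nonneg_left hx1 hG0]
  have hEcont : ContinuousOn E (Set.Icc (0:ℝ) 1) := by
    have hc : ContinuousOn (fun x => E 0 + ∫ t in (0:ℝ)..x, g t) (Set.Icc (0:ℝ) 1) := by
      apply ContinuousOn.add continuousOn_const
      have := intervalIntegral.continuousOn_primitive_interval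
        (a := (0:ℝ)) (b := (1:ℝ)) (μ := volume) (f := g) ?_
      · rwa [Set.uIcc_of_le zero_le_one] at this
      · rwa [Set.uIcc_of_le zero_le_one]
    exact hc.congr hAC
  have hEInt : ∀ a b : ℝ, a ∈ Set.Icc (0:ℝ) 1 → b ∈ Set.Icc (0:ℝ) 1 →
      IntervalIntegrable E volume a b := by
    intro a b ha hb
    exact (hEcont.mono (Set.uIcc_subset_Icc ha hb)).intervalIntegrable
  refine ⟨32 * (G + 1) * (K + 1), ?_⟩
  intro lam hlam
  have hlam0 : (0:ℝ) < lam := by linarith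
  set m := ⌊lam / 2⌋₊ with hmdef
  have hm1 : 1 ≤ m := Nat.le_floor (by push_cast; linarith)
  have hmle : (m:ℝ) ≤ lam / 2 := Nat.floor_le (by positivity)
  have hmgt : lam / 2 < m + 1 := Nat.lt_floor_add_one _
  set L := Real.log lam with hLdef
  have hL2 : Real.log 2 ≤ L := Real.log_le_log (by norm_num) hlam
  have hLhalf : (1:ℝ)/2 ≤ L := by nlinarith [Real.log_two_gt_d9]
  have hx01 : ∀ i : ℕ, i ≤ m → (2 * (i:ℝ) / lam) ∈ Set.Icc (0:ℝ) 1 := by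
    intro i hi
    constructor
    · positivity
    · rw [div_le_one hlam0]
      have : (i:ℝ) ≤ m := Nat.cast_le.mpr hi
      linarith
  set S : ℕ → ℝ := fun n => ∑ r ∈ Finset.Icc 1 n, primePairConst r with hSdef
  set ρ : ℕ → ℝ := fun n => S n - n with hρdef
  have hρ0 : ρ 0 = 0 := by simp [hρdef, hSdef]
  set B := (1/2)*L + K*(1 + 2*L) with hBdef
  have hBnn : 0 ≤ B := by
    rw [hBdef]
    nlinarith [mul_nonneg hK0 (show (0:ℝ) ≤ 1 + 2*L by linarith)]
  have hρb : ∀ r : ℕ, 1 ≤ r → r ≤ m → |ρ r| ≤ B := by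
    intro r h1 h2
    have hKr := hK r h1
    have hr1 : (1:ℝ) ≤ r := by exact_mod_cast h1
    have hrlam : (r:ℝ) ≤ lam := by
      have : (r:ℝ) ≤ m := Nat.cast_le.mpr h2
      linarith
    have hlogr : Real.log r ≤ L := Real.log_le_log (by linarith) hrlam
    have hlogr0 : 0 ≤ Real.log r := Real.log_nonneg hr1
    have hlog1 : Real.log ((r:ℝ)+1) ≤ 2*L := by
      have h3 : (r:ℝ) + 1 ≤ lam * lam := by nlinarith
      have h4 := Real.log_le_log (by linarith) h3
      rw [Real.log_mul hlam0.ne' hlam0.ne'] at h4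
      linarith
    have hlog1' : 0 ≤ Real.log ((r:ℝ)+1) := Real.log_nonneg (by linarith)
    have hpow : (Real.log ((r:ℝ)+1)) ^ ((2:ℝ)/3) ≤ 1 + Real.log ((r:ℝ)+1) := by
      rcases le_or_gt (Real.log ((r:ℝ)+1)) 1 with h | h
      · have := Real.rpow_le_one hlog1' h (by norm_num : (0:ℝ) ≤ 2/3)
        linarith
      · have h4 := Real.rpow_le_rpow_of_exponent_le h.le (by norm_num : (2:ℝ)/3 ≤ 1)
        rw [Real.rpow_one] at h4
        linarith
    have htri : |S r - (r:ℝ)| ≤ |S r - ((r:ℝ) - 1/2 * Real.log r)| + 1/2 * Real.log r := by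
      have h5 : S r - (r:ℝ) = (S r - ((r:ℝ) - 1/2 * Real.log r)) + (-(1/2 * Real.log r)) := by
        ring
      calc |S r - (r:ℝ)|
          = |(S r - ((r:ℝ) - 1/2 * Real.log r)) + (-(1/2 * Real.log r))| := by rw [h5]
        _ ≤ |S r - ((r:ℝ) - 1/2 * Real.log r)| + |(-(1/2 * Real.log r))| := abs_add_le _ _
        _ ≤ |S r - ((r:ℝ) - 1/2 * Real.log r)| + 1/2 * Real.log r := by
            rw [abs_neg, abs_of_nonneg (show (0:ℝ) ≤ 1/2 * Real.log r by linarith)]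
    have hmain : |S r - ((r:ℝ) - 1/2*Real.log r)| ≤ K * (1 + 2*L) := by
      refine le_trans (by simpa using hKr) ?_
      have h6 : (Real.log ((r:ℝ)+1)) ^ ((2:ℝ)/3) ≤ 1 + 2*L := by linarith
      exact mul_le_mul_of_nonneg_left h6 hK0
    have : ρ r = S r - (r:ℝ) := rfl
    rw [this, hBdef]
    calc |S r - (r:ℝ)| ≤ |S r - ((r:ℝ) - 1/2 * Real.log r)| + 1/2 * Real.log r := htri
      _ ≤ K * (1 + 2*L) + 1/2 * L := by linarith
      _ = 1/2*L + K*(1 + 2*L) := by ring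
  have hC : ∀ r : ℕ, 1 ≤ r → primePairConst r = 1 + (ρ r - ρ (r - 1)) := by
    intro r h1
    obtain ⟨k, rfl⟩ : ∃ k, r = k + 1 := ⟨r - 1, by omega⟩
    have hs : S (k+1) = S k + primePairConst (k+1) :=
      Finset.sum_Icc_succ_top (by omega) _
    simp only [hρdef, Nat.add_sub_cancel]
    rw [hs]
    push_cast
    ring
  set f : ℕ → ℝ := fun r => E (2 * (r:ℝ) / lam) with hfdef
  have hsplit : ∑ r ∈ Finset.Icc 1 m, E (2 * (r:ℝ) / lam) * primePairConst r
      = (∑ r ∈ Finset.Icc 1 m, f r)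
        + (f m * ρ m + ∑ r ∈ Finset.Icc 1 (m-1), (f r - f (r+1)) * ρ r) := by
    rw [← abel_aux f ρ hρ0 m, ← Finset.sum_add_distrib]
    apply Finset.sum_congr rfl
    intro r hr
    rw [Finset.mem_Icc] at hr
    rw [hC r hr.1]
    simp only [hfdef]
    ring
  have hT : |f m * ρ m + ∑ r ∈ Finset.Icc 1 (m-1), (f r - f (r+1)) * ρ r|
      ≤ (1 + 2*G) * B := by
    have h1 : |f m * ρ m| ≤ (1+G) * B := by
      rw [abs_mul]
      exact mul_le_mul (hEb _ (hx01 m le_rfl)) (hρb m hm1 le_rfl) (abs_nonneg _) (by linarith)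
    have h3 : ∀ r ∈ Finset.Icc 1 (m-1), |(f r - f (r+1)) * ρ r| ≤ (G * (2/lam)) * B := by
      intro r hr
      rw [Finset.mem_Icc] at hr
      have hr1 : r + 1 ≤ m := by omega
      rw [abs_mul]
      refine mul_le_mul ?_ (hρb r hr.1 (by omega)) (abs_nonneg _) (by positivity)
      have hl := hLip (2*(r:ℝ)/lam) (2*((r:ℕ)+1:ℝ)/lam) (hx01 r (by omega))
        (by exact_mod_cast hx01 (r+1) hr1)
      have hd : (2*((r:ℕ)+1:ℝ)/lam) - (2*(r:ℝ)/lam) = 2/lam := by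
        field_simp
        ring
      have habs : f r - f (r+1) = -(E (2*((r:ℕ)+1:ℝ)/lam) - E (2*(r:ℝ)/lam)) := by
        simp only [hfdef]
        push_cast
        ring_nf
      rw [habs, abs_neg]
      calc |E (2*((r:ℕ)+1:ℝ)/lam) - E (2*(r:ℝ)/lam)|
          ≤ G * |(2*((r:ℕ)+1:ℝ)/lam) - (2*(r:ℝ)/lam)| := hl
        _ = G * (2/lam) := by rw [hd, abs_of_pos (by positivity)]
    have h2 : |∑ r ∈ Finset.Icc 1 (m-1), (f r - f (r+1)) * ρ r| ≤ G * B := by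
      calc |∑ r ∈ Finset.Icc 1 (m-1), (f r - f (r+1)) * ρ r|
          ≤ ∑ r ∈ Finset.Icc 1 (m-1), |(f r - f (r+1)) * ρ r| :=
            Finset.abs_sum_le_sum_abs _ _
        _ ≤ ∑ _r ∈ Finset.Icc 1 (m-1), (G * (2/lam)) * B := Finset.sum_le_sum h3
        _ = ((m-1 : ℕ) : ℝ) * ((G * (2/lam)) * B) := by
            rw [Finset.sum_const, Nat.card_Icc, nsmul_eq_mul]
            simp only [Nat.add_sub_cancel]
        _ ≤ G * B := by
            have hc : ((m-1 : ℕ) : ℝ) ≤ lam / 2 := by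
              have : ((m-1 : ℕ) : ℝ) ≤ (m : ℝ) := Nat.cast_le.mpr (Nat.sub_le _ _)
              linarith
            have e1 : ((m-1 : ℕ) : ℝ) * ((G * (2/lam)) * B)
                = (((m-1 : ℕ) : ℝ) * 2 * G / lam) * B := by ring
            rw [e1]
            refine mul_le_mul_of_nonneg_right ?_ hBnn
            rw [div_le_iff₀ hlam0]
            nlinarith [mul_nonneg hG0 (sub_nonneg.mpr hc)]
    calc |f m * ρ m + ∑ r ∈ Finset.Icc 1 (m-1), (f r - f (r+1)) * ρ r|
        ≤ |f m * ρ m| + |∑ r ∈ Finset.Icc 1 (m-1), (f r - f (r+1)) * ρ r| := abs_add_le _ _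
      _ ≤ (1+G)*B + G*B := by linarith
      _ = (1 + 2*G) * B := by ring
  set x : ℕ → ℝ := fun i => 2*(i:ℝ)/lam with hxdef
  have hxmem : ∀ i : ℕ, i ≤ m → x i ∈ Set.Icc (0:ℝ) 1 := fun i hi => hx01 i hi
  have hx0 : x 0 = 0 := by simp [hxdef]
  have hIsum : ∑ i ∈ Finset.range m, ∫ ν in x i..x (i+1), E ν = ∫ ν in (x 0)..(x m), E ν :=
    intervalIntegral.sum_integral_adjacent_intervals (fun k hk =>
      hEInt _ _ (hxmem k (by omega)) (hxmem (k+1) (by omega)))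
  have hIsplit : ∫ ν in (0:ℝ)..1, E ν =
      (∑ i ∈ Finset.range m, ∫ ν in x i..x (i+1), E ν) + ∫ ν in x m..1, E ν := by
    rw [hIsum, hx0]
    exact (intervalIntegral.integral_add_adjacent_intervals
      (hEInt 0 (x m) (by norm_num) (hxmem m le_rfl))
      (hEInt (x m) 1 (hxmem m le_rfl) (by norm_num))).symm
  have hdiffx : ∀ i : ℕ, x (i+1) - x i = 2/lam := by
    intro i
    simp only [hxdef]
    push_cast
    field_simp
    ring
  have hRiem : ∀ i ∈ Finset.range m,
      |(∫ ν in x i..x (i+1), E ν) - (2/lam) * f (i+1)| ≤ (2*G/lam) * (2/lam) := by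
    intro i hi
    rw [Finset.mem_range] at hi
    have hxi := hxmem i (by omega)
    have hxi1 := hxmem (i+1) (by omega)
    have hdx := hdiffx i
    have hsub : (∫ ν in x i..x (i+1), E ν) - (2/lam) * f (i+1)
        = ∫ ν in x i..x (i+1), (E ν - f (i+1)) := by
      rw [intervalIntegral.integral_sub (hEInt _ _ hxi hxi1) intervalIntegrable_const,
        intervalIntegral.integral_const, hdx, smul_eq_mul]
    rw [hsub, ← Real.norm_eq_abs]
    have hbd : ∀ ν ∈ Set.uIoc (x i) (x (i+1)), ‖E ν - f (i+1)‖ ≤ 2*G/lam := by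
      intro ν hν
      have hle : x i ≤ x (i+1) := by
        have : (0:ℝ) < 2/lam := by positivity
        linarith
      rw [Set.uIoc_of_le hle] at hν
      have hν01 : ν ∈ Set.Icc (0:ℝ) 1 := ⟨le_trans hxi.1 hν.1.le, le_trans hν.2 hxi1.2⟩
      have hlip := hLip (x (i+1)) ν hxi1 hν01
      have hfx : f (i+1) = E (x (i+1)) := by simp [hfdef, hxdef]
      rw [hfx, Real.norm_eq_abs]
      have h21 := hν.1
      have h22 := hν.2
      have habs : |ν - x (i+1)| ≤ 2/lam := by
        rw [abs_of_nonpos (by linarith : ν - x (i+1) ≤ 0)]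
        linarith
      calc |E ν - E (x (i+1))| ≤ G * |ν - x (i+1)| := hlip
        _ ≤ G * (2/lam) := mul_le_mul_of_nonneg_left habs hG0
        _ = 2*G/lam := by ring
    have := intervalIntegral.norm_integral_le_of_norm_le_const hbd
    rwa [show x (i+1) - x i = 2/lam from hdx, abs_of_pos (by positivity : (0:ℝ) < 2/lam)] at this
  have hF : ∑ r ∈ Finset.Icc 1 m, f r = ∑ i ∈ Finset.range m, f (i+1) := by
    rw [← Finset.Ico_add_one_right_eq_Icc, Finset.sum_Ico_eq_sum_range]
    exact Finset.sum_congr (by rw [Nat.add_sub_cancel]) (fun i _ => by rw [add_comm])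
  have hMain : |2 * (∑ r ∈ Finset.Icc 1 m, f r) - lam * ∫ ν in (0:ℝ)..1, E ν|
      ≤ 2*G + 2*(1+G) := by
    rw [hF, hIsplit, mul_add]
    have h2 : lam * ∑ i ∈ Finset.range m, (2/lam) * f (i+1)
        = 2 * ∑ i ∈ Finset.range m, f (i+1) := by
      rw [Finset.mul_sum, Finset.mul_sum]
      refine Finset.sum_congr rfl (fun i _ => ?_)
      field_simp
    have heq : 2 * (∑ i ∈ Finset.range m, f (i+1))
        - ((lam * ∑ i ∈ Finset.range m, ∫ ν in x i..x (i+1), E ν) + lam * ∫ ν in x m..1, E ν)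
        = (- lam) * (∑ i ∈ Finset.range m,
            ((∫ ν in x i..x (i+1), E ν) - (2/lam) * f (i+1)))
          - lam * ∫ ν in x m..1, E ν := by
      rw [Finset.sum_sub_distrib]
      linear_combination -h2
    rw [heq]
    have hA : |(- lam) * (∑ i ∈ Finset.range m,
        ((∫ ν in x i..x (i+1), E ν) - (2/lam) * f (i+1)))| ≤ 2*G := by
      rw [abs_mul, abs_neg, abs_of_pos hlam0]
      have hsum : |∑ i ∈ Finset.range m,
          ((∫ ν in x i..x (i+1), E ν) - (2/lam) * f (i+1))|
          ≤ (m:ℝ) * ((2*G/lam) * (2/lam)) := by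
        calc |∑ i ∈ Finset.range m, ((∫ ν in x i..x (i+1), E ν) - (2/lam) * f (i+1))|
            ≤ ∑ i ∈ Finset.range m, |(∫ ν in x i..x (i+1), E ν) - (2/lam) * f (i+1)| :=
              Finset.abs_sum_le_sum_abs _ _
          _ ≤ ∑ _i ∈ Finset.range m, (2*G/lam) * (2/lam) := Finset.sum_le_sum hRiem
          _ = (m:ℝ) * ((2*G/lam) * (2/lam)) := by
              rw [Finset.sum_const, Finset.card_range, nsmul_eq_mul]
      have hgoal : lam * ((m:ℝ) * ((2*G/lam) * (2/lam))) ≤ 2*G := by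
        have e1 : lam * ((m:ℝ) * ((2*G/lam) * (2/lam))) = (m:ℝ) * (4*G) / lam := by
          field_simp
          ring
        rw [e1, div_le_iff₀ hlam0]
        nlinarith [mul_nonneg hG0 (sub_nonneg.mpr hmle)]
      calc lam * |∑ i ∈ Finset.range m, ((∫ ν in x i..x (i+1), E ν) - (2/lam) * f (i+1))|
          ≤ lam * ((m:ℝ) * ((2*G/lam) * (2/lam))) :=
            mul_le_mul_of_nonneg_left hsum hlam0.le
        _ ≤ 2*G := hgoal
    have hB2 : |lam * ∫ ν in x m..1, E ν| ≤ 2*(1+G) := by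
      rw [abs_mul, abs_of_pos hlam0]
      have hxm1 : x m ≤ 1 := (hxmem m le_rfl).2
      have htail : |∫ ν in x m..1, E ν| ≤ (1+G) * |1 - x m| := by
        rw [← Real.norm_eq_abs (∫ ν in x m..1, E ν)]
        apply intervalIntegral.norm_integral_le_of_norm_le_const
        intro ν hν
        rw [Set.uIoc_of_le hxm1] at hν
        have hν01 : ν ∈ Set.Icc (0:ℝ) 1 := ⟨le_trans (hxmem m le_rfl).1 hν.1.le, hν.2⟩
        rw [Real.norm_eq_abs]
        exact hEb ν hν01
      have hsmall : |1 - x m| ≤ 2/lam := by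
        rw [abs_of_nonneg (by linarith : (0:ℝ) ≤ 1 - x m)]
        have hxm : x m = 2*(m:ℝ)/lam := rfl
        rw [hxm]
        have e : 1 - 2*(m:ℝ)/lam = (lam - 2*(m:ℝ))/lam := by field_simp
        rw [e]
        gcongr
        linarith
      have htail2 : |∫ ν in x m..1, E ν| ≤ (1+G)*(2/lam) :=
        htail.trans (mul_le_mul_of_nonneg_left hsmall (by linarith))
      calc lam * |∫ ν in x m..1, E ν| ≤ lam * ((1+G)*(2/lam)) :=
            mul_le_mul_of_nonneg_left htail2 hlam0.le
        _ = 2*(1+G) := by field_simp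
    calc |(- lam) * (∑ i ∈ Finset.range m,
          ((∫ ν in x i..x (i+1), E ν) - (2/lam) * f (i+1)))
          - lam * ∫ ν in x m..1, E ν|
        ≤ |(- lam) * (∑ i ∈ Finset.range m,
            ((∫ ν in x i..x (i+1), E ν) - (2/lam) * f (i+1)))|
          + |lam * ∫ ν in x m..1, E ν| := abs_sub _ _
      _ ≤ 2*G + 2*(1+G) := by linarith
  rw [hsplit]
  have hre : 2 * ((∑ r ∈ Finset.Icc 1 m, f r)
        + (f m * ρ m + ∑ r ∈ Finset.Icc 1 (m-1), (f r - f (r+1)) * ρ r))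
      - lam * ∫ ν in (0:ℝ)..1, E ν
      = (2 * (∑ r ∈ Finset.Icc 1 m, f r) - lam * ∫ ν in (0:ℝ)..1, E ν)
        + 2 * (f m * ρ m + ∑ r ∈ Finset.Icc 1 (m-1), (f r - f (r+1)) * ρ r) := by
    ring
  rw [hre]
  calc |(2 * (∑ r ∈ Finset.Icc 1 m, f r) - lam * ∫ ν in (0:ℝ)..1, E ν)
        + 2 * (f m * ρ m + ∑ r ∈ Finset.Icc 1 (m-1), (f r - f (r+1)) * ρ r)|
      ≤ |2 * (∑ r ∈ Finset.Icc 1 m, f r) - lam * ∫ ν in (0:ℝ)..1, E ν|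
        + |2 * (f m * ρ m + ∑ r ∈ Finset.Icc 1 (m-1), (f r - f (r+1)) * ρ r)| := abs_add_le _ _
    _ ≤ (2*G + 2*(1+G)) + 2 * ((1 + 2*G) * B) := by
        rw [abs_mul, abs_two]
        linarith
    _ ≤ 32 * (G + 1) * (K + 1) * L := by
        rw [hBdef]
        nlinarith [mul_nonneg hG0 hK0, hLhalf, hG0, hK0,
          mul_nonneg hG0 (by linarith : (0:ℝ) ≤ 2*L - 1),
          mul_nonneg hK0 (by linarith : (0:ℝ) ≤ 2*L - 1),
          mul_nonneg (mul_nonneg hG0 hK0) (by linarith : (0:ℝ) ≤ 2*L - 1)]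
end
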